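/- Let S be a finite set with positive real weights w and let m ≥ 1 with m + 1 ≤ |S|. Then the weighted elementary symmetric sums are log-concave at m: (e_m(S; w))² ≥ e_{m+1}(S; w) · e_{m-1}(S; w). -/
import Mathlib


/-- Weighted elementary symmetric sum: `e_m(S; w) = Σ_{T̂ ⊆ S, |T̂| = m} ∏_{j ∈ T̂} w_j`. -/
noncomputable def esymm {ι : Type*} (S : Finset ι) (w : ι → ℝ) (m : ℕ) : ℝ :=
  ∑ T ∈ S.powersetCard m, ∏ j ∈ T, w j

lemma esymm_nonneg {ι : Type*} (S : Finset ι) (w : ι → ℝ)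
    (hw : ∀ j ∈ S, 0 < w j) (m : ℕ) : 0 ≤ esymm S w m := by
  refine Finset.sum_nonneg fun T hT => Finset.prod_nonneg fun j hj => ?_
  rw [Finset.mem_powersetCard] at hT
  exact (hw j (hT.1 hj)).le

lemma esymm_pos {ι : Type*} (S : Finset ι) (w : ι → ℝ)
    (hw : ∀ j ∈ S, 0 < w j) (m : ℕ) (hm : m ≤ S.card) : 0 < esymm S w m := by
  refine Finset.sum_pos (fun T hT => Finset.prod_pos fun j hj => ?_) ?_
  · rw [Finset.mem_powersetCard] at hT
    exact hw j (hT.1 hj)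
  · exact Finset.powersetCard_nonempty.2 hm

lemma esymm_eq_zero {ι : Type*} (S : Finset ι) (w : ι → ℝ) (m : ℕ)
    (hm : S.card < m) : esymm S w m = 0 := by
  rw [esymm, Finset.powersetCard_eq_empty.2 hm, Finset.sum_empty]

lemma esymm_insert {ι : Type*} [DecidableEq ι] {x : ι} {S : Finset ι} (hx : x ∉ S)
    (w : ι → ℝ) (n : ℕ) :
    esymm (insert x S) w (n + 1) = esymm S w (n + 1) + w x * esymm S w n := by
  have hdisj : Disjoint (S.powersetCard (n + 1)) ((S.powersetCard n).image (insert x)) := by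
    rw [Finset.disjoint_left]
    intro T hT hT'
    rw [Finset.mem_powersetCard] at hT
    obtain ⟨U, hU, rfl⟩ := Finset.mem_image.1 hT'
    exact hx (hT.1 (Finset.mem_insert_self x U))
  have hinj : ∀ a ∈ S.powersetCard n, ∀ b ∈ S.powersetCard n,
      insert x a = insert x b → a = b := by
    intro a ha b hb hab
    rw [Finset.mem_powersetCard] at ha hb
    have hxa : x ∉ a := fun h => hx (ha.1 h)
    have hxb : x ∉ b := fun h => hx (hb.1 h)
    rw [← Finset.erase_insert hxa, ← Finset.erase_insert hxb, hab]
  rw [esymm, Finset.powersetCard_succ_insert hx, Finset.sum_union hdisj]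
  congr 1
  rw [Finset.sum_image hinj, esymm, Finset.mul_sum]
  refine Finset.sum_congr rfl fun T hT => ?_
  rw [Finset.mem_powersetCard] at hT
  exact Finset.prod_insert (fun h => hx (hT.1 h))

lemma esymm_logconcave {ι : Type*} (S : Finset ι) (w : ι → ℝ)
    (hw : ∀ j ∈ S, 0 < w j) : ∀ n : ℕ,
    esymm S w (n + 2) * esymm S w n ≤ esymm S w (n + 1) ^ 2 := by
  classical
  induction S using Finset.cons_induction with
  | empty =>
    intro n
    rw [esymm_eq_zero _ _ _ (by simp)]
    simpa using sq_nonneg (esymm (∅ : Finset ι) w (n + 1))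
  | cons x S hx ih =>
    have hwS : ∀ j ∈ S, 0 < w j := fun j hj => hw j (Finset.mem_cons_of_mem hj)
    have hwx : 0 < w x := hw x (Finset.mem_cons_self x S)
    have ih := ih hwS
    -- cross inequality
    have cross : ∀ k : ℕ, esymm S w (k + 3) * esymm S w k ≤
        esymm S w (k + 2) * esymm S w (k + 1) := by
      intro k
      by_cases h : k + 3 ≤ S.card
      · have p1 := esymm_pos S w hwS (k + 1) (by omega)
        have p2 := esymm_pos S w hwS (k + 2) (by omega)
        have p0 := esymm_pos S w hwS k (by omega)
        have p3 := esymm_pos S w hwS (k + 3) (by omega)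
        have h1 := ih (k + 1)
        have h2 := ih k
        nlinarith [mul_pos p1 p2, sq_nonneg (esymm S w (k+1)), sq_nonneg (esymm S w (k+2))]
      · rw [esymm_eq_zero S w (k + 3) (by omega), zero_mul]
        exact mul_nonneg (esymm_nonneg S w hwS _) (esymm_nonneg S w hwS _)
    intro n
    have hins : ∀ T (h : x ∉ T), Finset.cons x T h = insert x T := by
      intro T h; rw [Finset.cons_eq_insert]
    rw [hins S hx]
    have E : ∀ j : ℕ, esymm (insert x S) w (j + 1)
        = esymm S w (j + 1) + w x * esymm S w j := fun j => esymm_insert hx w j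
    match n with
    | 0 =>
      have e2 := E 1
      have e1 := E 0
      norm_num at e2 e1
      have h0 : esymm (insert x S) w 0 = 1 := by simp [esymm]
      rw [e2, e1, h0]
      have e0 : esymm S w 0 = 1 := by simp [esymm]
      have h1 := ih 0
      rw [e0] at h1 ⊢
      have n1 := esymm_nonneg S w hwS 1
      nlinarith
    | (k + 1) =>
      rw [show k + 1 + 2 = k + 2 + 1 by omega, E (k + 2), E (k + 1), E k]
      have h1 := ih (k + 1)
      have h2 := ih k
      have h3 := cross k
      have n0 := esymm_nonneg S w hwS k
      have n1 := esymm_nonneg S w hwS (k + 1)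
      have n2 := esymm_nonneg S w hwS (k + 2)
      have n3 := esymm_nonneg S w hwS (k + 3)
      nlinarith [sq_nonneg (w x), hwx.le]

/-- For a finite set `S` with positive weights and `1 ≤ m`, `m + 1 ≤ |S|`, the weighted
elementary symmetric sums are log-concave at `m`:
`(e_m(S; w))² ≥ e_{m+1}(S; w) · e_{m-1}(S; w)`. -/
theorem esymm_sq_ge_mul {ι : Type*} (S : Finset ι) (w : ι → ℝ)
    (hw : ∀ j ∈ S, 0 < w j) (m : ℕ) (hm : 1 ≤ m) (hcard : m + 1 ≤ S.card) :
    esymm S w (m + 1) * esymm S w (m - 1) ≤ (esymm S w m) ^ 2 := by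
  obtain ⟨n, rfl⟩ : ∃ n, m = n + 1 := ⟨m - 1, by omega⟩
  simpa using esymm_logconcave S w hw n
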